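/- In the longitudinal censored quantile regression model under conditions A1–A4 (with the errors u_{ij} having common marginal density f and the null model y_{ij} = max(0, x_{ij}'α0 + u_{ij})), let Q̄_n(α) = E[ n^{-1} Σ_{ij} { ρ_τ(y_{ij} − max(0, x_{ij}'α)) − ρ_τ(y_{ij} − max(0, x_{ij}'α0)) } ]. Then Q̄_n(α) ≥ (1/2) ϱ1 c² · n^{-1} Σ_{ij} I(x_{ij}'α0 ≥ ε0) I(|x_{ij}'(α − α0)| ≥ c) for any 0 < c < min(ε0, ϱ1); consequently, for every ε > 0, Q̄_n(α) is strictly positive, uniformly bounded below by a positive constant, for all α ∈ A with ‖α − α0‖ ≥ ε and all n sufficiently large. -/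

import Mathlib

open MeasureTheory ProbabilityTheory Filter Finset
open scoped BigOperators RealInnerProductSpace NNReal ENNReal

noncomputable section

/-- Quantile loss function `ρ_τ(u) = u (τ − I(u<0))`. -/
def qloss (τ u : ℝ) : ℝ := u * (τ - if u < 0 then 1 else 0)

/-- Total sample size `n = Σ_{i<N} n_i`. -/
def tot (ni : ℕ → ℕ) (N : ℕ) : ℕ := ∑ i ∈ Finset.range N, ni i

section Aux
open Set
variable {Ω : Type*} [MeasurableSpace Ω]
lemma qloss_eq (τ u : ℝ) : qloss τ u = τ * u + max 0 (-u) := by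
  unfold qloss; split_ifs with h
  · rw [max_eq_right (by linarith : (0:ℝ) ≤ -u)]; ring
  · push_neg at h
    rw [max_eq_left (by linarith : -u ≤ (0:ℝ))]; ring

lemma qloss_sub (τ w v v0 : ℝ) :
    qloss τ (w - v) - qloss τ (w - v0)
      = max 0 (v - w) - max 0 (v0 - w) - τ * (v - v0) := by
  simp only [qloss_eq, neg_sub]; ring

lemma measurable_qloss (τ : ℝ) : Measurable (qloss τ) := by
  unfold qloss
  exact measurable_id.mul (measurable_const.sub
    (Measurable.ite measurableSet_Iio measurable_const measurable_const))

lemma qloss_lip (τ s t : ℝ) (hτ0 : 0 ≤ τ) (hτ1 : τ ≤ 1) :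
    |qloss τ s - qloss τ t| ≤ 2 * |s - t| := by
  rw [qloss_eq, qloss_eq]
  have h1 : |max 0 (-s) - max 0 (-t)| ≤ |(-s) - (-t)| := by
    rw [max_comm 0 (-s), max_comm 0 (-t)]
    exact abs_max_sub_max_le_abs _ _ _
  have h2 : |(-s) - (-t)| = |s - t| := by rw [show (-s) - (-t) = -(s-t) by ring, abs_neg]
  calc |τ * s + max 0 (-s) - (τ * t + max 0 (-t))|
      = |τ * (s - t) + (max 0 (-s) - max 0 (-t))| := by ring_nf
    _ ≤ |τ * (s - t)| + |max 0 (-s) - max 0 (-t)| := abs_add_le _ _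
    _ ≤ 1 * |s - t| + |s - t| := by
        rw [abs_mul]
        have := abs_nonneg (s - t)
        have hτ : |τ| ≤ 1 := abs_le.2 ⟨by linarith, hτ1⟩
        rw [h2] at h1
        gcongr
    _ = 2 * |s - t| := by ring

lemma lint_one (P : Measure Ω) [IsProbabilityMeasure P] (u : Ω → ℝ) (hu : Measurable u)
    (f : ℝ → ℝ)
    (hmap : P.map u = volume.withDensity fun t => ENNReal.ofReal (f t)) :
    ∫⁻ t, ENNReal.ofReal (f t) = 1 := by
  have h1 : (P.map u) Set.univ = 1 := by
    rw [Measure.map_apply hu MeasurableSet.univ]; simp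
  rw [hmap] at h1
  rw [withDensity_apply _ MeasurableSet.univ] at h1
  simpa using h1

lemma f_integrable (f : ℝ → ℝ) (hf_meas : Measurable f) (hf_nonneg : ∀ t, 0 ≤ f t)
    (h1 : ∫⁻ t, ENNReal.ofReal (f t) = 1) : Integrable f := by
  refine ⟨hf_meas.aestronglyMeasurable, ?_⟩
  rw [hasFiniteIntegral_iff_ofReal (ae_of_all _ hf_nonneg), h1]
  exact ENNReal.one_lt_top

lemma f_int_one (f : ℝ → ℝ) (hf_meas : Measurable f) (hf_nonneg : ∀ t, 0 ≤ f t)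
    (h1 : ∫⁻ t, ENNReal.ofReal (f t) = 1) : ∫ t, f t = 1 := by
  rw [integral_eq_lintegral_of_nonneg_ae (ae_of_all _ hf_nonneg) hf_meas.aestronglyMeasurable, h1]
  simp

lemma expect_eq (P : Measure Ω) (u : Ω → ℝ) (hu : Measurable u)
    (f : ℝ → ℝ) (hf_meas : Measurable f) (hf_nonneg : ∀ t, 0 ≤ f t)
    (hmap : P.map u = volume.withDensity fun t => ENNReal.ofReal (f t))
    (g : ℝ → ℝ) (hg : Measurable g) :
    ∫ ω, g (u ω) ∂P = ∫ t, g t * f t := by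
  rw [← integral_map hu.aemeasurable hg.aestronglyMeasurable, hmap]
  have : (fun t => ENNReal.ofReal (f t)) = fun t => ((Real.toNNReal (f t) : ℝ≥0) : ℝ≥0∞) := rfl
  rw [this, integral_withDensity_eq_integral_smul hf_meas.real_toNNReal g]
  congr 1; funext t
  simp [NNReal.smul_def, Real.coe_toNNReal _ (hf_nonneg t), mul_comm]


lemma core_bound (τ : ℝ) (hτ : τ ∈ Set.Ioo (0:ℝ) 1)
    (f : ℝ → ℝ) (hf_meas : Measurable f) (hf_nonneg : ∀ t, 0 ≤ f t)
    (hf_int : Integrable f) (hf_one : ∫ t, f t = 1)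
    (hquantile : ∫ t in Set.Iic (0:ℝ), f t = τ)
    (ϱ1 : ℝ) (hϱ1 : 0 < ϱ1) (hf_lb : ∀ t, |t| < ϱ1 → ϱ1 < f t)
    (ε0 : ℝ) (c : ℝ) (hc : 0 < c) (hcε : c < ε0) (hcϱ : c < ϱ1)
    (a0 a : ℝ) :
    (if ε0 ≤ a0 then (1:ℝ) else 0) * (if c ≤ |a - a0| then (1:ℝ) else 0) * (ϱ1 * c^2 / 2)
      ≤ ∫ t, (qloss τ (max 0 (a0+t) - max 0 a) - qloss τ (max 0 (a0+t) - max 0 a0)) * f t := by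
  obtain ⟨hτ0, hτ1⟩ := hτ
  set w : ℝ → ℝ := fun t => max 0 (a0 + t) with hw
  set ψ : ℝ → ℝ → ℝ := fun s t => max 0 (s - w t) with hψ
  -- basic facts about ψ
  have hψcont : ∀ s, Continuous (ψ s) := fun s =>
    continuous_const.max (continuous_const.sub
      (continuous_const.max (continuous_const.add continuous_id)))
  have hψmono : ∀ {s1 s2 : ℝ} (t : ℝ), s1 ≤ s2 → ψ s1 t ≤ ψ s2 t := fun {s1 s2} t h =>
    max_le_max le_rfl (by linarith)
  have hψlip : ∀ (s1 s2 t : ℝ), |ψ s2 t - ψ s1 t| ≤ |s2 - s1| := by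
    intro s1 s2 t
    rw [hψ]
    simp only
    rw [max_comm 0 (s2 - w t), max_comm 0 (s1 - w t)]
    calc |max (s2 - w t) 0 - max (s1 - w t) 0| ≤ |(s2 - w t) - (s1 - w t)| :=
          abs_max_sub_max_le_abs _ _ _
      _ = |s2 - s1| := by ring_nf
  -- integrability of increments against f
  have hinteg : ∀ s1 s2 : ℝ, Integrable (fun t => (ψ s2 t - ψ s1 t) * f t) := by
    intro s1 s2
    refine Integrable.mono' (hf_int.const_mul |s2 - s1|)
      ((((hψcont s2).sub (hψcont s1)).measurable.mul hf_meas).aestronglyMeasurable)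
      (ae_of_all _ fun t => ?_)
    rw [Real.norm_eq_abs, abs_mul, abs_of_nonneg (hf_nonneg t)]
    exact mul_le_mul_of_nonneg_right (hψlip s1 s2 t) (hf_nonneg t)
  set DIF : ℝ → ℝ → ℝ := fun s1 s2 => ∫ t, (ψ s2 t - ψ s1 t) * f t with hDIF
  have hDIFadd : ∀ s1 s2 s3 : ℝ, DIF s1 s3 = DIF s1 s2 + DIF s2 s3 := by
    intro s1 s2 s3
    rw [hDIF]
    simp only
    rw [← integral_add (hinteg s1 s2) (hinteg s2 s3)]
    congr 1; funext t; ring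
  have hDIFneg : ∀ s1 s2 : ℝ, DIF s2 s1 = -DIF s1 s2 := by
    intro s1 s2
    rw [hDIF]; simp only
    rw [← integral_neg]
    congr 1; funext t; ring
  have hIio : ∫ t in Set.Iio (0:ℝ), f t = τ := by
    rw [setIntegral_congr_set Iio_ae_eq_Iic]; exact hquantile
  -- L1
  have L1 : ∀ s1 s2 : ℝ, max 0 a0 ≤ s1 → s1 ≤ s2 → τ * (s2 - s1) ≤ DIF s1 s2 := by
    intro s1 s2 hs1 hs12
    have heq : τ * (s2 - s1) = ∫ t, Set.indicator (Set.Iic (0:ℝ)) (fun t => (s2 - s1) * f t) t := by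
      rw [integral_indicator measurableSet_Iic, integral_const_mul, hquantile]; ring
    rw [heq]
    refine integral_mono ((hf_int.const_mul (s2-s1)).indicator measurableSet_Iic)
      (hinteg s1 s2) (fun t => ?_)
    by_cases ht : t ∈ Set.Iic (0:ℝ)
    · rw [Set.indicator_of_mem ht]
      have htle : t ≤ 0 := ht
      have hwle : w t ≤ s1 := le_trans (max_le_max le_rfl (by linarith)) hs1
      have h2 : ψ s2 t = s2 - w t := max_eq_right (by linarith)
      have h1 : ψ s1 t = s1 - w t := max_eq_right (by linarith)
      rw [h2, h1]
      apply mul_le_mul_of_nonneg_right (by linarith) (hf_nonneg t)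
    · rw [Set.indicator_of_notMem ht]
      exact mul_nonneg (by linarith [hψmono t hs12]) (hf_nonneg t)
  -- L2
  have L2 : ∀ s1 s2 : ℝ, s1 ≤ s2 → s2 ≤ a0 → DIF s1 s2 ≤ τ * (s2 - s1) := by
    intro s1 s2 hs12 hs2
    have heq : τ * (s2 - s1) = ∫ t, Set.indicator (Set.Iio (0:ℝ)) (fun t => (s2 - s1) * f t) t := by
      rw [integral_indicator measurableSet_Iio, integral_const_mul, hIio]; ring
    rw [heq]
    refine integral_mono (hinteg s1 s2)
      ((hf_int.const_mul (s2-s1)).indicator measurableSet_Iio) (fun t => ?_)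
    by_cases ht : t ∈ Set.Iio (0:ℝ)
    · rw [Set.indicator_of_mem ht]
      have h := hψlip s1 s2 t
      rw [abs_of_nonneg (by linarith : (0:ℝ) ≤ s2 - s1)] at h
      have : ψ s2 t - ψ s1 t ≤ s2 - s1 := le_trans (le_abs_self _) h
      exact mul_le_mul_of_nonneg_right this (hf_nonneg t)
    · rw [Set.indicator_of_notMem ht]
      have htge : (0:ℝ) ≤ t := le_of_not_gt ht
      have hwge : s2 ≤ w t := le_trans (by linarith) (le_max_right _ _)
      have h2 : ψ s2 t = 0 := max_eq_left (by linarith)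
      have h1 : ψ s1 t = 0 := max_eq_left (by linarith)
      rw [h2, h1]; simp
  -- elementary integrals
  have hI1 : ∫ t in Set.Ioo (0:ℝ) c, (c - t) = c^2/2 := by
    rw [← integral_Ioc_eq_integral_Ioo, ← intervalIntegral.integral_of_le hc.le]
    rw [intervalIntegral.integral_sub intervalIntegrable_const intervalIntegral.intervalIntegrable_id]
    rw [intervalIntegral.integral_const, integral_id]
    simp; ring
  have hI2 : ∫ t in Set.Ioo (-c) (0:ℝ), (c + t) = c^2/2 := by
    rw [← integral_Ioc_eq_integral_Ioo, ← intervalIntegral.integral_of_le (by linarith : -c ≤ (0:ℝ))]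
    rw [intervalIntegral.integral_add intervalIntegrable_const intervalIntegral.intervalIntegrable_id]
    rw [intervalIntegral.integral_const, integral_id]
    simp; ring
  have hio1 : Integrable ((Set.Ioo (0:ℝ) c).indicator (fun t => ϱ1 * (c - t))) := by
    refine IntegrableOn.integrable_indicator ?_ measurableSet_Ioo
    exact ((continuous_const.mul (continuous_const.sub continuous_id)).integrableOn_Icc).mono_set
      Set.Ioo_subset_Icc_self
  have hio2 : Integrable ((Set.Ioo (-c) (0:ℝ)).indicator (fun t => ϱ1 * (c + t))) := by
    refine IntegrableOn.integrable_indicator ?_ measurableSet_Ioo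
    exact ((continuous_const.mul (continuous_const.add continuous_id)).integrableOn_Icc).mono_set
      Set.Ioo_subset_Icc_self
  -- L4 : lower bound on the upward c-step at a0 (needs 0 < a0)
  have L4 : 0 < a0 → τ * c + ϱ1 * c^2 / 2 ≤ DIF a0 (a0 + c) := by
    intro ha0
    have heq : τ * c + ϱ1 * c^2 / 2
        = ∫ t, (Set.indicator (Set.Iic (0:ℝ)) (fun t => c * f t) t
            + Set.indicator (Set.Ioo (0:ℝ) c) (fun t => ϱ1 * (c - t)) t) := by
      rw [integral_add ((hf_int.const_mul c).indicator measurableSet_Iic) hio1]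
      rw [integral_indicator measurableSet_Iic, integral_indicator measurableSet_Ioo]
      rw [integral_const_mul, hquantile, integral_const_mul, hI1]
      ring
    rw [heq]
    refine integral_mono
      (((hf_int.const_mul c).indicator measurableSet_Iic).add hio1)
      (hinteg a0 (a0+c)) (fun t => ?_)
    by_cases ht : t ≤ 0
    · have hmem : t ∈ Set.Iic (0:ℝ) := ht
      have hnmem : t ∉ Set.Ioo (0:ℝ) c := fun h => absurd h.1 (not_lt.2 ht)
      rw [Set.indicator_of_mem hmem, Set.indicator_of_notMem hnmem, add_zero]
      have hinc : ψ (a0 + c) t - ψ a0 t = c := by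
        by_cases h2 : a0 + t ≤ 0
        · have hw0 : w t = 0 := max_eq_left h2
          have e1 : ψ (a0+c) t = a0 + c := by
            rw [hψ]; simp only; rw [hw0, sub_zero]; exact max_eq_right (by linarith)
          have e2 : ψ a0 t = a0 := by
            rw [hψ]; simp only; rw [hw0, sub_zero]; exact max_eq_right (by linarith)
          rw [e1, e2]; ring
        · push_neg at h2
          have hw0 : w t = a0 + t := max_eq_right h2.le
          have e1 : ψ (a0+c) t = c - t := by
            rw [hψ]; simp only; rw [hw0]
            rw [show a0 + c - (a0 + t) = c - t by ring]
            exact max_eq_right (by linarith)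
          have e2 : ψ a0 t = -t := by
            rw [hψ]; simp only; rw [hw0]
            rw [show a0 - (a0 + t) = -t by ring]
            exact max_eq_right (by linarith)
          rw [e1, e2]; ring
      rw [hinc]
    · push_neg at ht
      have hnmem : t ∉ Set.Iic (0:ℝ) := not_le.2 ht
      rw [Set.indicator_of_notMem hnmem, zero_add]
      have hw0 : w t = a0 + t := max_eq_right (by linarith)
      by_cases h2 : t < c
      · have hmem : t ∈ Set.Ioo (0:ℝ) c := ⟨ht, h2⟩
        rw [Set.indicator_of_mem hmem]
        have e1 : ψ (a0+c) t = c - t := by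
          rw [hψ]; simp only; rw [hw0, show a0 + c - (a0 + t) = c - t by ring]
          exact max_eq_right (by linarith)
        have e2 : ψ a0 t = 0 := by
          rw [hψ]; simp only; rw [hw0, show a0 - (a0 + t) = -t by ring]
          exact max_eq_left (by linarith)
        rw [e1, e2, sub_zero]
        have hflb : ϱ1 < f t := hf_lb t (by rw [abs_of_pos ht]; linarith)
        nlinarith [hflb]
      · have hnmem2 : t ∉ Set.Ioo (0:ℝ) c := fun h => absurd h.2 h2
        rw [Set.indicator_of_notMem hnmem2]
        exact mul_nonneg (by linarith [hψmono t (by linarith : a0 ≤ a0 + c)]) (hf_nonneg t)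
  -- L3 : upper bound on the downward c-step at a0 (needs c ≤ a0)
  have L3 : c ≤ a0 → DIF (a0 - c) a0 ≤ τ * c - ϱ1 * c^2 / 2 := by
    intro hca0
    have ha0 : 0 < a0 := lt_of_lt_of_le hc hca0
    have heq : τ * c - ϱ1 * c^2 / 2
        = ∫ t, (Set.indicator (Set.Iic (0:ℝ)) (fun t => c * f t) t
            - Set.indicator (Set.Ioo (-c) (0:ℝ)) (fun t => ϱ1 * (c + t)) t) := by
      rw [integral_sub ((hf_int.const_mul c).indicator measurableSet_Iic) hio2]
      rw [integral_indicator measurableSet_Iic, integral_indicator measurableSet_Ioo]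
      rw [integral_const_mul, hquantile, integral_const_mul, hI2]
      ring
    rw [heq]
    refine integral_mono (hinteg (a0-c) a0)
      (((hf_int.const_mul c).indicator measurableSet_Iic).sub hio2) (fun t => ?_)
    by_cases ht : t ≤ -c
    · have hmem : t ∈ Set.Iic (0:ℝ) := le_trans ht (by linarith)
      have hnmem : t ∉ Set.Ioo (-c) (0:ℝ) := fun h => absurd h.1 (not_lt.2 ht)
      rw [Set.indicator_of_mem hmem, Set.indicator_of_notMem hnmem, sub_zero]
      have hinc : ψ a0 t - ψ (a0 - c) t = c := by
        by_cases h2 : a0 + t ≤ 0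
        · have hw0 : w t = 0 := max_eq_left h2
          have e1 : ψ a0 t = a0 := by
            rw [hψ]; simp only; rw [hw0, sub_zero]; exact max_eq_right (by linarith)
          have e2 : ψ (a0-c) t = a0 - c := by
            rw [hψ]; simp only; rw [hw0, sub_zero]; exact max_eq_right (by linarith)
          rw [e1, e2]; ring
        · push_neg at h2
          have hw0 : w t = a0 + t := max_eq_right h2.le
          have e1 : ψ a0 t = -t := by
            rw [hψ]; simp only; rw [hw0, show a0 - (a0 + t) = -t by ring]
            exact max_eq_right (by linarith)
          have e2 : ψ (a0-c) t = -c - t := by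
            rw [hψ]; simp only; rw [hw0, show a0 - c - (a0 + t) = -c - t by ring]
            exact max_eq_right (by linarith)
          rw [e1, e2]; ring
      rw [hinc]
    · push_neg at ht
      have hw0 : w t = a0 + t := max_eq_right (by linarith)
      have e2 : ψ (a0-c) t = 0 := by
        rw [hψ]; simp only; rw [hw0, show a0 - c - (a0 + t) = -c - t by ring]
        exact max_eq_left (by linarith)
      by_cases h2 : t ≤ 0
      · have hmem : t ∈ Set.Iic (0:ℝ) := h2
        have e1 : ψ a0 t = -t := by
          rw [hψ]; simp only; rw [hw0, show a0 - (a0 + t) = -t by ring]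
          exact max_eq_right (by linarith)
        rw [e1, e2, sub_zero, Set.indicator_of_mem hmem]
        by_cases h3 : t < 0
        · have hmem2 : t ∈ Set.Ioo (-c) (0:ℝ) := ⟨ht, h3⟩
          rw [Set.indicator_of_mem hmem2]
          have hflb : ϱ1 < f t := hf_lb t (by rw [abs_of_neg h3]; linarith)
          nlinarith [hf_nonneg t]
        · have h0 : t = 0 := le_antisymm h2 (not_lt.1 h3)
          have hnmem2 : t ∉ Set.Ioo (-c) (0:ℝ) := by rw [h0]; simp
          rw [Set.indicator_of_notMem hnmem2, sub_zero, h0]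
          have := hf_nonneg 0
          nlinarith
      · push_neg at h2
        have hnmem : t ∉ Set.Iic (0:ℝ) := not_le.2 h2
        have hnmem2 : t ∉ Set.Ioo (-c) (0:ℝ) := fun h => absurd h.2 (not_lt.2 h2.le)
        have e1 : ψ a0 t = 0 := by
          rw [hψ]; simp only; rw [hw0, show a0 - (a0 + t) = -t by ring]
          exact max_eq_left (by linarith)
        rw [e1, e2, Set.indicator_of_notMem hnmem, Set.indicator_of_notMem hnmem2]
        simp
  -- rewrite the goal integral
  set v : ℝ := max 0 a with hv
  set v0 : ℝ := max 0 a0 with hv0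
  have hgoal : ∫ t, (qloss τ (max 0 (a0+t) - max 0 a) - qloss τ (max 0 (a0+t) - max 0 a0)) * f t
      = DIF v0 v - τ * (v - v0) := by
    have hre : ∀ t : ℝ, (qloss τ (max 0 (a0+t) - max 0 a) - qloss τ (max 0 (a0+t) - max 0 a0)) * f t
        = (ψ v t - ψ v0 t) * f t - (τ * (v - v0)) * f t := by
      intro t
      rw [qloss_sub τ (max 0 (a0+t)) (max 0 a) (max 0 a0)]
      have : ψ v t = max 0 (v - max 0 (a0+t)) := rfl
      rw [this]
      have : ψ v0 t = max 0 (v0 - max 0 (a0+t)) := rfl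
      rw [this, ← hv, ← hv0]
      ring
    simp_rw [hre]
    rw [integral_sub (hinteg v0 v) (hf_int.const_mul (τ * (v - v0))), integral_const_mul, hf_one]
    ring
  rw [hgoal]
  -- general nonnegativity
  have hpos : 0 ≤ DIF v0 v - τ * (v - v0) := by
    rcases le_total v0 v with h | h
    · have := L1 v0 v le_rfl h
      linarith
    · by_cases ha0 : 0 < a0
      · have hv0a : v0 = a0 := max_eq_right ha0.le
        have := L2 v v0 h (le_of_eq hv0a)
        have hneg := hDIFneg v v0
        linarith
      · have hv00 : v0 = 0 := max_eq_left (not_lt.1 ha0)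
        have hvv : v = v0 := le_antisymm h (hv00 ▸ le_max_left 0 a)
        rw [hvv]
        have : DIF v0 v0 = 0 := by
          rw [hDIF]; simp only [sub_self, zero_mul, integral_zero]
        rw [this]; simp
  by_cases h1 : ε0 ≤ a0
  · by_cases h2 : c ≤ |a - a0|
    · rw [if_pos h1, if_pos h2, one_mul, one_mul]
      have ha0pos : 0 < a0 := lt_of_lt_of_le (lt_trans hc hcε) h1
      have hv0a : v0 = a0 := max_eq_right ha0pos.le
      rcases le_abs.1 h2 with h3 | h3
      · -- c ≤ a - a0, so a ≥ a0 + c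
        have hva : v = a := max_eq_right (by linarith)
        have hsplit := hDIFadd a0 (a0 + c) a
        have h4 := L4 ha0pos
        have h5 := L1 (a0 + c) a (by rw [← hv0a, hv0a]; linarith [le_max_right (0:ℝ) a0, max_le (le_of_lt ha0pos) le_rfl]) (by linarith)
        rw [hv0a, hva]
        linarith
      · -- c ≤ -(a - a0), so a ≤ a0 - c
        have hac : a ≤ a0 - c := by linarith
        have hvle : v ≤ a0 - c := max_le (by linarith) hac
        have hsplit := hDIFadd v (a0 - c) a0
        have h5 := L2 v (a0 - c) hvle (by linarith)
        have h3' := L3 (by linarith : c ≤ a0)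
        have hneg := hDIFneg v a0
        rw [hv0a]
        linarith
    · rw [if_neg h2, mul_zero, zero_mul]; exact hpos
  · rw [if_neg h1, zero_mul, zero_mul]; exact hpos

lemma sum_swap4 {β : Type*} [AddCommMonoid β] (n1 n2 : ℕ) (m : ℕ → ℕ) (N : ℕ)
    (F : Fin n1 → Fin n2 → (i : ℕ) → ((j : Fin (m i)) → β)) :
    ∑ a : Fin n1, ∑ b : Fin n2, ∑ i ∈ Finset.range N, ∑ j : Fin (m i), F a b i j
      = ∑ i ∈ Finset.range N, ∑ j : Fin (m i), ∑ a : Fin n1, ∑ b : Fin n2, F a b i j := by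
  calc ∑ a : Fin n1, ∑ b : Fin n2, ∑ i ∈ Finset.range N, ∑ j : Fin (m i), F a b i j
      = ∑ a : Fin n1, ∑ i ∈ Finset.range N, ∑ j : Fin (m i), ∑ b : Fin n2, F a b i j := by
        refine Finset.sum_congr rfl fun a _ => ?_
        rw [Finset.sum_comm]
        exact Finset.sum_congr rfl fun i _ => Finset.sum_comm
    _ = ∑ i ∈ Finset.range N, ∑ a : Fin n1, ∑ j : Fin (m i), ∑ b : Fin n2, F a b i j :=
        Finset.sum_comm
    _ = ∑ i ∈ Finset.range N, ∑ j : Fin (m i), ∑ a : Fin n1, ∑ b : Fin n2, F a b i j :=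
        Finset.sum_congr rfl fun i _ => Finset.sum_comm

end Aux


set_option maxHeartbeats 2000000 in
/-- under conditions A1–A4 and the null model, the population objective
`Q̄_n(α) = E[n⁻¹ Σ_{ij} {ρ_τ(y_{ij} − max(0, x_{ij}'α)) − ρ_τ(y_{ij} − max(0, x_{ij}'α0))}]`
satisfies `Q̄_n(α) ≥ ½ ϱ1 c² n⁻¹ Σ_{ij} I(x_{ij}'α0 ≥ ε0) I(|x_{ij}'(α−α0)| ≥ c)` for any
`0 < c < min(ε0, ϱ1)`; consequently for every `ε > 0` it is uniformly bounded below by a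
positive constant over `α ∈ A` with `‖α − α0‖ ≥ ε`, for all `n` sufficiently large. -/
theorem censored_qr_population_objective_lower_bound
    {Ω : Type*} [MeasurableSpace Ω] (P : Measure Ω) [IsProbabilityMeasure P]
    (p q : ℕ) (τ : ℝ) (hτ : τ ∈ Set.Ioo (0:ℝ) 1)
    -- longitudinal design: subject i has `ni i` repeated measurements, `ni` bounded
    (ni : ℕ → ℕ) (hni_pos : ∀ i, 0 < ni i) (M : ℕ) (hni_bdd : ∀ i, ni i ≤ M)
    (x : (i : ℕ) → Fin (ni i) → EuclideanSpace ℝ (Fin p))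
    (z : (i : ℕ) → Fin (ni i) → EuclideanSpace ℝ (Fin q))
    -- random errors: independent across subjects (possibly dependent within a subject)
    (u : (i : ℕ) → Fin (ni i) → Ω → ℝ)
    (hu_meas : ∀ i j, Measurable (u i j))
    (hu_indep : iIndepFun
      (fun i ω => fun j : Fin (ni i) => u i j ω) P)
    -- condition A4: common marginal Lebesgue density f, Lipschitz near 0, bounded above,
    -- bounded below near 0, with τth quantile equal to 0
    (f : ℝ → ℝ) (hf_meas : Measurable f) (hf_nonneg : ∀ t, 0 ≤ f t)
    (hmarginal : ∀ i j, P.map (u i j) = volume.withDensity fun t => ENNReal.ofReal (f t))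
    (hquantile : ∫ t in Set.Iic (0:ℝ), f t = τ)
    (hf_lip : ∃ K : ℝ≥0, ∃ ε > 0, LipschitzOnWith K f (Metric.ball (0:ℝ) ε))
    (ϱ1 ϱ2 : ℝ) (hϱ1 : 0 < ϱ1) (hϱ2 : 0 < ϱ2)
    (hf_ub : ∀ t, f t < ϱ2) (hf_lb : ∀ t, |t| < ϱ1 → ϱ1 < f t)
    -- condition A1: α0 is interior to the compact parameter space A
    (A : Set (EuclideanSpace ℝ (Fin p))) (hA_cpt : IsCompact A)
    (α0 : EuclideanSpace ℝ (Fin p)) (hα0 : α0 ∈ interior A)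
    (β0 : EuclideanSpace ℝ (Fin q))
    -- condition A2
    (hA2a : ∃ C > (0:ℝ), ∀ N, 1 ≤ N → ∀ i ∈ Finset.range N, ∀ j : Fin (ni i),
        Real.sqrt (‖x i j‖ ^ 2 + ‖z i j‖ ^ 2) ≤ C * (tot ni N : ℝ) ^ ((1:ℝ)/4))
    (hA2b : ∃ C > (0:ℝ), ∀ N, 1 ≤ N →
        (tot ni N : ℝ)⁻¹ *
          ∑ i ∈ Finset.range N, ∑ j : Fin (ni i),
            Real.sqrt (‖x i j‖ ^ 2 + ‖z i j‖ ^ 2) ^ 3 ≤ C)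
    -- condition A3
    (D1 : Matrix (Fin p) (Fin p) ℝ) (hD1 : D1.PosDef)
    (ε0 : ℝ) (hε0 : 0 < ε0)
    (hA3 : (∀ α : EuclideanSpace ℝ (Fin p), α ≠ 0 →
        0 < Filter.liminf (fun N => (tot ni N : ℝ)⁻¹ *
              ∑ i ∈ Finset.range N, ∑ j : Fin (ni i),
                (if ε0 ≤ |⟪x i j, α⟫| then (1:ℝ) else 0)) Filter.atTop) ∧
      Filter.Tendsto (fun N => Matrix.of fun a b => (tot ni N : ℝ)⁻¹ *
            ∑ i ∈ Finset.range N, ∑ j : Fin (ni i),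
              (if ε0 ≤ ⟪x i j, α0⟫ then x i j a * x i j b else 0))
        Filter.atTop (nhds D1))
    -- null model responses
    (y : (i : ℕ) → Fin (ni i) → Ω → ℝ)
    (hy : ∀ i j ω, y i j ω = max 0 (⟪x i j, α0⟫ + u i j ω))
    -- the population objective Q̄_n
    (Qbar : ℕ → EuclideanSpace ℝ (Fin p) → ℝ)
    (hQbar : ∀ N α, Qbar N α = ∫ ω, ((tot ni N : ℝ)⁻¹ *
        ∑ i ∈ Finset.range N, ∑ j : Fin (ni i),
          (qloss τ (y i j ω - max 0 ⟪x i j, α⟫) -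
            qloss τ (y i j ω - max 0 ⟪x i j, α0⟫))) ∂P) :
    -- conclusion
    (∀ c : ℝ, 0 < c → c < min ε0 ϱ1 → ∀ N, ∀ α : EuclideanSpace ℝ (Fin p),
      (1/2) * ϱ1 * c ^ 2 *
          ((tot ni N : ℝ)⁻¹ * ∑ i ∈ Finset.range N, ∑ j : Fin (ni i),
            (if ε0 ≤ ⟪x i j, α0⟫ then (1:ℝ) else 0) *
              (if c ≤ |⟪x i j, α - α0⟫| then (1:ℝ) else 0)) ≤ Qbar N α) ∧
    (∀ ε : ℝ, 0 < ε → ∃ c0 > (0:ℝ), ∃ N0 : ℕ, ∀ N, N0 ≤ N →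
      ∀ α ∈ A, ε ≤ ‖α - α0‖ → c0 ≤ Qbar N α) := by
  have hfl1 : ∫⁻ t, ENNReal.ofReal (f t) = 1 :=
    lint_one P (u 0 ⟨0, hni_pos 0⟩) (hu_meas 0 _) f (hmarginal 0 _)
  have hf_int : Integrable f := f_integrable f hf_meas hf_nonneg hfl1
  have hf_one : ∫ t, f t = 1 := f_int_one f hf_meas hf_nonneg hfl1
  have hymeas : ∀ i (j : Fin (ni i)), Measurable (y i j) := fun i j => by
    have : y i j = fun ω => max 0 (⟪x i j, α0⟫ + u i j ω) := funext (hy i j)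
    rw [this]; exact measurable_const.max (measurable_const.add (hu_meas i j))
  have hterm_meas : ∀ i (j : Fin (ni i)) (b : ℝ), Measurable (fun ω =>
      qloss τ (y i j ω - max 0 b) - qloss τ (y i j ω - max 0 ⟪x i j, α0⟫)) := fun i j b =>
    ((measurable_qloss τ).comp ((hymeas i j).sub measurable_const)).sub
      ((measurable_qloss τ).comp ((hymeas i j).sub measurable_const))
  have hterm_int : ∀ i (j : Fin (ni i)) (b : ℝ), Integrable (fun ω =>
      qloss τ (y i j ω - max 0 b) - qloss τ (y i j ω - max 0 ⟪x i j, α0⟫)) P := by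
    intro i j b
    refine Integrable.mono' (integrable_const (2 * |max 0 b - max 0 ⟪x i j, α0⟫|))
      (hterm_meas i j b).aestronglyMeasurable (ae_of_all _ fun ω => ?_)
    rw [Real.norm_eq_abs]
    have h := qloss_lip τ (y i j ω - max 0 b) (y i j ω - max 0 ⟪x i j, α0⟫) hτ.1.le hτ.2.le
    have he : |(y i j ω - max 0 b) - (y i j ω - max 0 ⟪x i j, α0⟫)|
        = |max 0 b - max 0 ⟪x i j, α0⟫| := by
      rw [show (y i j ω - max 0 b) - (y i j ω - max 0 ⟪x i j, α0⟫)
          = -(max 0 b - max 0 ⟪x i j, α0⟫) by ring, abs_neg]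
    rw [he] at h; exact h
  have hpart1 : ∀ c : ℝ, 0 < c → c < min ε0 ϱ1 → ∀ N, ∀ α : EuclideanSpace ℝ (Fin p),
      (1/2) * ϱ1 * c ^ 2 *
          ((tot ni N : ℝ)⁻¹ * ∑ i ∈ Finset.range N, ∑ j : Fin (ni i),
            (if ε0 ≤ ⟪x i j, α0⟫ then (1:ℝ) else 0) *
              (if c ≤ |⟪x i j, α - α0⟫| then (1:ℝ) else 0)) ≤ Qbar N α := by
    intro c hc hcmin N α
    have hcε : c < ε0 := lt_of_lt_of_le hcmin (min_le_left _ _)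
    have hcϱ : c < ϱ1 := lt_of_lt_of_le hcmin (min_le_right _ _)
    rw [hQbar N α]
    have hninv : (0:ℝ) ≤ ((tot ni N : ℝ))⁻¹ := inv_nonneg.2 (Nat.cast_nonneg _)
    have hswap : (∫ ω, ((tot ni N : ℝ)⁻¹ *
        ∑ i ∈ Finset.range N, ∑ j : Fin (ni i),
          (qloss τ (y i j ω - max 0 ⟪x i j, α⟫) -
            qloss τ (y i j ω - max 0 ⟪x i j, α0⟫))) ∂P)
        = (tot ni N : ℝ)⁻¹ * ∑ i ∈ Finset.range N, ∑ j : Fin (ni i),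
            ∫ ω, (qloss τ (y i j ω - max 0 ⟪x i j, α⟫) -
              qloss τ (y i j ω - max 0 ⟪x i j, α0⟫)) ∂P := by
      rw [integral_const_mul]
      congr 1
      rw [integral_finset_sum _ (fun i _ => integrable_finset_sum _ (fun j _ => hterm_int i j _))]
      exact Finset.sum_congr rfl fun i _ => integral_finset_sum _ (fun j _ => hterm_int i j _)
    rw [hswap]
    have hper : ∀ i ∈ Finset.range N, ∀ j : Fin (ni i),
        (if ε0 ≤ ⟪x i j, α0⟫ then (1:ℝ) else 0) *
          (if c ≤ |⟪x i j, α - α0⟫| then (1:ℝ) else 0) * (ϱ1 * c^2/2)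
          ≤ ∫ ω, (qloss τ (y i j ω - max 0 ⟪x i j, α⟫) -
              qloss τ (y i j ω - max 0 ⟪x i j, α0⟫)) ∂P := by
      intro i _ j
      have hG : Measurable (fun t : ℝ =>
          qloss τ (max 0 (⟪x i j, α0⟫ + t) - max 0 ⟪x i j, α⟫) -
            qloss τ (max 0 (⟪x i j, α0⟫ + t) - max 0 ⟪x i j, α0⟫)) :=
        ((measurable_qloss τ).comp
          ((measurable_const.max (measurable_const.add measurable_id)).sub measurable_const)).sub
        ((measurable_qloss τ).comp
          ((measurable_const.max (measurable_const.add measurable_id)).sub measurable_const))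
      have hchg : ∫ ω, (qloss τ (y i j ω - max 0 ⟪x i j, α⟫) -
            qloss τ (y i j ω - max 0 ⟪x i j, α0⟫)) ∂P
          = ∫ t, (qloss τ (max 0 (⟪x i j, α0⟫ + t) - max 0 ⟪x i j, α⟫) -
              qloss τ (max 0 (⟪x i j, α0⟫ + t) - max 0 ⟪x i j, α0⟫)) * f t := by
        have he : (fun ω => qloss τ (y i j ω - max 0 ⟪x i j, α⟫) -
            qloss τ (y i j ω - max 0 ⟪x i j, α0⟫))
            = fun ω => (fun t : ℝ =>
                qloss τ (max 0 (⟪x i j, α0⟫ + t) - max 0 ⟪x i j, α⟫) -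
                  qloss τ (max 0 (⟪x i j, α0⟫ + t) - max 0 ⟪x i j, α0⟫)) (u i j ω) := by
          funext ω; rw [hy i j ω]
        rw [he]
        exact expect_eq P (u i j) (hu_meas i j) f hf_meas hf_nonneg (hmarginal i j) _ hG
      rw [hchg]
      have hcore := core_bound τ hτ f hf_meas hf_nonneg hf_int hf_one hquantile ϱ1 hϱ1 hf_lb
        ε0 c hc hcε hcϱ (⟪x i j, α0⟫) (⟪x i j, α⟫)
      have hinner : ⟪x i j, α - α0⟫ = ⟪x i j, α⟫ - ⟪x i j, α0⟫ := inner_sub_right _ _ _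
      rw [hinner]
      exact hcore
    have hsum : ∑ i ∈ Finset.range N, ∑ j : Fin (ni i),
        ((if ε0 ≤ ⟪x i j, α0⟫ then (1:ℝ) else 0) *
          (if c ≤ |⟪x i j, α - α0⟫| then (1:ℝ) else 0) * (ϱ1 * c^2/2))
        ≤ ∑ i ∈ Finset.range N, ∑ j : Fin (ni i),
            ∫ ω, (qloss τ (y i j ω - max 0 ⟪x i j, α⟫) -
              qloss τ (y i j ω - max 0 ⟪x i j, α0⟫)) ∂P :=
      Finset.sum_le_sum fun i hi => Finset.sum_le_sum fun j _ => hper i hi j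
    calc (1/2) * ϱ1 * c ^ 2 *
          ((tot ni N : ℝ)⁻¹ * ∑ i ∈ Finset.range N, ∑ j : Fin (ni i),
            (if ε0 ≤ ⟪x i j, α0⟫ then (1:ℝ) else 0) *
              (if c ≤ |⟪x i j, α - α0⟫| then (1:ℝ) else 0))
        = (tot ni N : ℝ)⁻¹ * ∑ i ∈ Finset.range N, ∑ j : Fin (ni i),
            ((if ε0 ≤ ⟪x i j, α0⟫ then (1:ℝ) else 0) *
              (if c ≤ |⟪x i j, α - α0⟫| then (1:ℝ) else 0) * (ϱ1 * c^2/2)) := by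
          have h1 : ∑ i ∈ Finset.range N, ∑ j : Fin (ni i),
              ((if ε0 ≤ ⟪x i j, α0⟫ then (1:ℝ) else 0) *
                (if c ≤ |⟪x i j, α - α0⟫| then (1:ℝ) else 0) * (ϱ1 * c^2/2))
              = (∑ i ∈ Finset.range N, ∑ j : Fin (ni i),
                  (if ε0 ≤ ⟪x i j, α0⟫ then (1:ℝ) else 0) *
                    (if c ≤ |⟪x i j, α - α0⟫| then (1:ℝ) else 0)) * (ϱ1 * c^2/2) := by
            rw [Finset.sum_mul]
            exact Finset.sum_congr rfl fun i _ => (Finset.sum_mul _ _ _).symm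
          rw [h1]; ring
      _ ≤ (tot ni N : ℝ)⁻¹ * ∑ i ∈ Finset.range N, ∑ j : Fin (ni i),
            ∫ ω, (qloss τ (y i j ω - max 0 ⟪x i j, α⟫) -
              qloss τ (y i j ω - max 0 ⟪x i j, α0⟫)) ∂P :=
          mul_le_mul_of_nonneg_left hsum hninv
  refine ⟨hpart1, ?_⟩
  intro ε hε
  -- bound the parameter set
  obtain ⟨r, hr⟩ := hA_cpt.isBounded.subset_closedBall α0
  set R : ℝ := max r 1 with hR
  have hR1 : (1:ℝ) ≤ R := le_max_right _ _
  have hRpos : (0:ℝ) < R := lt_of_lt_of_le one_pos hR1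
  have hAR : ∀ α ∈ A, ‖α - α0‖ ≤ R := by
    intro α hα
    have h := hr hα
    rw [Metric.mem_closedBall, dist_eq_norm] at h
    exact le_trans h (le_max_left _ _)
  set K : Set (EuclideanSpace ℝ (Fin p)) := {v | ε ≤ ‖v‖ ∧ ‖v‖ ≤ R} with hKdef
  by_cases hKne : K.Nonempty
  swap
  · refine ⟨1, one_pos, 0, fun N _ α hα hαε => absurd ?_ hKne⟩
    exact ⟨α - α0, hαε, hAR α hα⟩
  -- quadratic form
  set qf : Matrix (Fin p) (Fin p) ℝ → EuclideanSpace ℝ (Fin p) → ℝ :=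
    fun Mx v => ∑ a : Fin p, ∑ b : Fin p, v a * Mx a b * v b with hqf
  have hqfD1pos : ∀ v : EuclideanSpace ℝ (Fin p), v ≠ 0 → 0 < qf D1 v := by
    intro v hv
    have hv' : (fun a => v a) ≠ 0 := fun h0 => hv (by ext a; simpa using congrFun h0 a)
    have h := hD1.dotProduct_mulVec_pos (x := fun a => v a) hv'
    have heq : dotProduct (star fun a => v a) (D1.mulVec fun a => v a) = qf D1 v := by
      simp only [hqf, dotProduct, Matrix.mulVec, Pi.star_apply, star_trivial,
        Finset.mul_sum]
      exact Finset.sum_congr rfl fun a _ => Finset.sum_congr rfl fun b _ => by ring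
    rwa [heq] at h
  have hqfc : Continuous (qf D1) := by
    refine continuous_finset_sum _ fun a _ => continuous_finset_sum _ fun b _ => ?_
    exact ((PiLp.continuous_apply 2 _ a).mul continuous_const).mul (PiLp.continuous_apply 2 _ b)
  have hKcpt : IsCompact K := by
    have hclosed : IsClosed K :=
      IsClosed.inter (isClosed_le continuous_const continuous_norm)
        (isClosed_le continuous_norm continuous_const)
    refine (isCompact_closedBall (0 : EuclideanSpace ℝ (Fin p)) R).of_isClosed_subset hclosed ?_
    intro v hv
    rw [Metric.mem_closedBall, dist_zero_right]
    exact hv.2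
  obtain ⟨vm, hvmK, hvmmin⟩ := hKcpt.exists_isMinOn hKne hqfc.continuousOn
  set lam : ℝ := qf D1 vm with hlamdef
  have hlam : 0 < lam := by
    refine hqfD1pos vm fun h0 => ?_
    have := hvmK.1
    rw [h0, norm_zero] at this
    linarith
  -- entrywise convergence and error control
  have hent : ∀ a b : Fin p, Tendsto (fun N => ((Matrix.of fun a b => (tot ni N : ℝ)⁻¹ *
      ∑ i ∈ Finset.range N, ∑ j : Fin (ni i),
        (if ε0 ≤ ⟪x i j, α0⟫ then x i j a * x i j b else 0)) : Matrix (Fin p) (Fin p) ℝ) a b)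
      atTop (nhds (D1 a b)) := by
    intro a b
    have hcab : Continuous fun Mx : Matrix (Fin p) (Fin p) ℝ => Mx a b :=
      (continuous_apply b).comp (continuous_apply a)
    exact (hcab.tendsto D1).comp hA3.2
  have herr : Tendsto (fun N => ∑ a : Fin p, ∑ b : Fin p,
      |(tot ni N : ℝ)⁻¹ * (∑ i ∈ Finset.range N, ∑ j : Fin (ni i),
        (if ε0 ≤ ⟪x i j, α0⟫ then x i j a * x i j b else 0)) - D1 a b|) atTop (nhds 0) := by
    have hb : ∀ a : Fin p, Tendsto (fun N => ∑ b : Fin p,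
        |(tot ni N : ℝ)⁻¹ * (∑ i ∈ Finset.range N, ∑ j : Fin (ni i),
          (if ε0 ≤ ⟪x i j, α0⟫ then x i j a * x i j b else 0)) - D1 a b|) atTop (nhds 0) := by
      intro a
      have h1 := tendsto_finset_sum (Finset.univ : Finset (Fin p))
        (fun b (_ : b ∈ Finset.univ) => ((hent a b).sub
          (tendsto_const_nhds : Tendsto (fun _ : ℕ => D1 a b) atTop (nhds (D1 a b)))).abs)
      simpa [Matrix.of_apply] using h1
    have h2 := tendsto_finset_sum (Finset.univ : Finset (Fin p)) (fun a (_ : a ∈ Finset.univ) => hb a)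
    simpa using h2
  obtain ⟨C, hCpos, hC⟩ := hA2b
  -- choice of c
  have hcb : 0 < min ε0 ϱ1 := lt_min hε0 hϱ1
  set c : ℝ := min (min ε0 ϱ1 / 2) (Real.sqrt (lam/8)) with hcdef
  have hcpos : 0 < c := lt_min (by linarith) (Real.sqrt_pos.2 (by linarith))
  have hclt : c < min ε0 ϱ1 := lt_of_le_of_lt (min_le_left _ _) (by linarith)
  have hc2 : c^2 ≤ lam/8 := by
    have h1 : c ≤ Real.sqrt (lam/8) := min_le_right _ _
    calc c^2 ≤ (Real.sqrt (lam/8))^2 := by nlinarith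
      _ = lam/8 := Real.sq_sqrt (by linarith)
  set d : ℝ := lam/4 with hddef
  have hdpos : 0 < d := by rw [hddef]; linarith
  set L : ℝ := max 1 (2*(R^3*C)/d) with hLdef
  have hL1 : (1:ℝ) ≤ L := le_max_left _ _
  have hLpos : (0:ℝ) < L := lt_of_lt_of_le one_pos hL1
  have hRC : 0 < R^3*C := by positivity
  have hRCL : (R^3*C)/L ≤ d/2 := by
    rw [div_le_iff₀ hLpos]
    have h1 : 2*(R^3*C)/d ≤ L := le_max_right _ _
    calc R^3*C = d/2 * (2*(R^3*C)/d) := by field_simp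
      _ ≤ d/2 * L := by
          apply mul_le_mul_of_nonneg_left h1 (by linarith)
      _ = d/2*L := rfl
  -- choice of N0
  obtain ⟨N1, hN1⟩ := (Metric.tendsto_atTop.1 herr) (lam/(2*R^2)) (by positivity)
  refine ⟨(1/2)*ϱ1*c^2*(d/(2*L^2)), by positivity, max N1 1, ?_⟩
  intro N hN α hα hαε
  have hNN1 : N1 ≤ N := le_trans (le_max_left _ _) hN
  have hN1' : 1 ≤ N := le_trans (le_max_right _ _) hN
  set δ : EuclideanSpace ℝ (Fin p) := α - α0 with hδdef
  have hδK : δ ∈ K := ⟨hαε, hAR α hα⟩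
  have hδR : ‖δ‖ ≤ R := hδK.2
  -- basic positivity of sample size
  have hn1 : 1 ≤ tot ni N := by
    have h0 : (0:ℕ) ∈ Finset.range N := Finset.mem_range.2 (by omega)
    calc 1 ≤ ni 0 := hni_pos 0
      _ ≤ ∑ i ∈ Finset.range N, ni i := Finset.single_le_sum (fun i _ => Nat.zero_le _) h0
      _ = tot ni N := rfl
  have hnpos : (0:ℝ) < (tot ni N : ℝ) := by exact_mod_cast hn1
  have hninv : (0:ℝ) ≤ ((tot ni N : ℝ))⁻¹ := inv_nonneg.2 hnpos.le
  -- coordinate bound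
  have hcoord : ∀ (v : EuclideanSpace ℝ (Fin p)) (a : Fin p), |v a| ≤ ‖v‖ := by
    intro v a
    rw [EuclideanSpace.norm_eq]
    have h1 : ‖v a‖^2 ≤ ∑ i : Fin p, ‖v i‖^2 :=
      Finset.single_le_sum (f := fun i => ‖v i‖^2) (fun i _ => sq_nonneg _) (Finset.mem_univ a)
    have h2 := Real.sqrt_le_sqrt h1
    rwa [Real.sqrt_sq_eq_abs, abs_norm, Real.norm_eq_abs] at h2
  -- the empirical quadratic form evaluated at δ
  have hinnerform : ∀ (i : ℕ) (j : Fin (ni i)),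
      ∑ a : Fin p, ∑ b : Fin p, δ a * (if ε0 ≤ ⟪x i j, α0⟫ then x i j a * x i j b else 0) * δ b
        = (if ε0 ≤ ⟪x i j, α0⟫ then ⟪x i j, δ⟫^2 else 0) := by
    intro i j
    by_cases hcond : ε0 ≤ ⟪x i j, α0⟫
    · simp only [if_pos hcond]
      have hinner : ⟪x i j, δ⟫ = ∑ a : Fin p, x i j a * δ a := by
        simp [PiLp.inner_apply, RCLike.inner_apply, conj_trivial]
        exact Finset.sum_congr rfl fun _ _ => mul_comm _ _
      rw [hinner, sq, Finset.sum_mul_sum]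
      exact Finset.sum_congr rfl fun a _ => Finset.sum_congr rfl fun b _ => by ring
    · simp only [if_neg hcond, mul_zero, zero_mul, Finset.sum_const_zero]
  have hqfS2 : qf (Matrix.of fun a b => (tot ni N : ℝ)⁻¹ *
        ∑ i ∈ Finset.range N, ∑ j : Fin (ni i),
          (if ε0 ≤ ⟪x i j, α0⟫ then x i j a * x i j b else 0)) δ
      = (tot ni N : ℝ)⁻¹ * ∑ i ∈ Finset.range N, ∑ j : Fin (ni i),
          (if ε0 ≤ ⟪x i j, α0⟫ then ⟪x i j, δ⟫^2 else 0) := by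
    rw [hqf]
    simp only [Matrix.of_apply]
    have h1 : ∀ a b : Fin p, δ a * ((tot ni N : ℝ)⁻¹ *
        ∑ i ∈ Finset.range N, ∑ j : Fin (ni i),
          (if ε0 ≤ ⟪x i j, α0⟫ then x i j a * x i j b else 0)) * δ b
        = (tot ni N : ℝ)⁻¹ * ∑ i ∈ Finset.range N, ∑ j : Fin (ni i),
            (δ a * (if ε0 ≤ ⟪x i j, α0⟫ then x i j a * x i j b else 0) * δ b) := by
      intro a b
      have e1 : ∀ S : ℝ, δ a * ((tot ni N : ℝ)⁻¹ * S) * δ b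
          = (tot ni N : ℝ)⁻¹ * (S * (δ a * δ b)) := fun S => by ring
      rw [e1, Finset.sum_mul]
      congr 1
      refine Finset.sum_congr rfl fun i _ => ?_
      rw [Finset.sum_mul]
      exact Finset.sum_congr rfl fun j _ => by ring
    simp_rw [h1]
    simp_rw [← Finset.mul_sum]
    congr 1
    rw [sum_swap4]
    exact Finset.sum_congr rfl fun i _ => Finset.sum_congr rfl fun j _ => hinnerform i j
  -- lower bound for the empirical quadratic form
  have herrN := hN1 N hNN1
  rw [Real.dist_0_eq_abs] at herrN
  have herrN' : ∑ a : Fin p, ∑ b : Fin p,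
      |(tot ni N : ℝ)⁻¹ * (∑ i ∈ Finset.range N, ∑ j : Fin (ni i),
        (if ε0 ≤ ⟪x i j, α0⟫ then x i j a * x i j b else 0)) - D1 a b| ≤ lam/(2*R^2) := by
    refine le_of_lt (lt_of_le_of_lt (le_abs_self _) herrN)
  have hdiff : |qf (Matrix.of fun a b => (tot ni N : ℝ)⁻¹ *
        ∑ i ∈ Finset.range N, ∑ j : Fin (ni i),
          (if ε0 ≤ ⟪x i j, α0⟫ then x i j a * x i j b else 0)) δ - qf D1 δ|
      ≤ R^2 * ∑ a : Fin p, ∑ b : Fin p,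
          |(tot ni N : ℝ)⁻¹ * (∑ i ∈ Finset.range N, ∑ j : Fin (ni i),
            (if ε0 ≤ ⟪x i j, α0⟫ then x i j a * x i j b else 0)) - D1 a b| := by
    have he : qf (Matrix.of fun a b => (tot ni N : ℝ)⁻¹ *
        ∑ i ∈ Finset.range N, ∑ j : Fin (ni i),
          (if ε0 ≤ ⟪x i j, α0⟫ then x i j a * x i j b else 0)) δ - qf D1 δ
        = ∑ a : Fin p, ∑ b : Fin p, (δ a * ((tot ni N : ℝ)⁻¹ *
            (∑ i ∈ Finset.range N, ∑ j : Fin (ni i),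
              (if ε0 ≤ ⟪x i j, α0⟫ then x i j a * x i j b else 0)) - D1 a b) * δ b) := by
      simp only [hqf]
      rw [← Finset.sum_sub_distrib]
      refine Finset.sum_congr rfl fun a _ => ?_
      rw [← Finset.sum_sub_distrib]
      refine Finset.sum_congr rfl fun b _ => ?_
      simp only [Matrix.of_apply]
      ring
    rw [he]
    calc |∑ a : Fin p, ∑ b : Fin p, (δ a * ((tot ni N : ℝ)⁻¹ *
            (∑ i ∈ Finset.range N, ∑ j : Fin (ni i),
              (if ε0 ≤ ⟪x i j, α0⟫ then x i j a * x i j b else 0)) - D1 a b) * δ b)|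
        ≤ ∑ a : Fin p, ∑ b : Fin p, |δ a * ((tot ni N : ℝ)⁻¹ *
            (∑ i ∈ Finset.range N, ∑ j : Fin (ni i),
              (if ε0 ≤ ⟪x i j, α0⟫ then x i j a * x i j b else 0)) - D1 a b) * δ b| :=
          le_trans (Finset.abs_sum_le_sum_abs _ _)
            (Finset.sum_le_sum fun a _ => Finset.abs_sum_le_sum_abs _ _)
      _ ≤ ∑ a : Fin p, ∑ b : Fin p, R^2 * |(tot ni N : ℝ)⁻¹ *
            (∑ i ∈ Finset.range N, ∑ j : Fin (ni i),
              (if ε0 ≤ ⟪x i j, α0⟫ then x i j a * x i j b else 0)) - D1 a b| := by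
          refine Finset.sum_le_sum fun a _ => Finset.sum_le_sum fun b _ => ?_
          have ha : |δ a| ≤ R := le_trans (hcoord δ a) hδR
          have hb : |δ b| ≤ R := le_trans (hcoord δ b) hδR
          rw [abs_mul, abs_mul]
          calc |δ a| * |_| * |δ b| ≤ R * |_| * R :=
                mul_le_mul (mul_le_mul_of_nonneg_right ha (abs_nonneg _)) hb (abs_nonneg _)
                  (mul_nonneg hRpos.le (abs_nonneg _))
            _ = R^2 * |_| := by ring
      _ = R^2 * ∑ a : Fin p, ∑ b : Fin p, |(tot ni N : ℝ)⁻¹ *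
            (∑ i ∈ Finset.range N, ∑ j : Fin (ni i),
              (if ε0 ≤ ⟪x i j, α0⟫ then x i j a * x i j b else 0)) - D1 a b| := by
          rw [Finset.mul_sum]
          exact Finset.sum_congr rfl fun a _ => (Finset.mul_sum _ _ _).symm
  have hS2lb : lam/2 ≤ (tot ni N : ℝ)⁻¹ * ∑ i ∈ Finset.range N, ∑ j : Fin (ni i),
      (if ε0 ≤ ⟪x i j, α0⟫ then ⟪x i j, δ⟫^2 else 0) := by
    have h4 : lam ≤ qf D1 δ := hvmmin hδK
    have h5 := mul_le_mul_of_nonneg_left herrN' (by positivity : (0:ℝ) ≤ R^2)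
    have h6 : R^2 * (lam/(2*R^2)) = lam/2 := by field_simp
    rw [h6] at h5
    have h7 := (abs_le.1 (le_trans hdiff h5)).1
    rw [← hqfS2]
    linarith
  -- third moment bound
  have hB : (tot ni N : ℝ)⁻¹ * ∑ i ∈ Finset.range N, ∑ j : Fin (ni i), |⟪x i j, δ⟫|^3
      ≤ R^3*C := by
    have h8 : ∀ i ∈ Finset.range N, ∀ j : Fin (ni i),
        |⟪x i j, δ⟫|^3 ≤ R^3 * (Real.sqrt (‖x i j‖^2 + ‖z i j‖^2))^3 := by
      intro i _ j
      have hxle : ‖x i j‖ ≤ Real.sqrt (‖x i j‖^2 + ‖z i j‖^2) := by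
        exact Real.le_sqrt_of_sq_le (by nlinarith [sq_nonneg ‖z i j‖])
      have h9 : |⟪x i j, δ⟫| ≤ R * Real.sqrt (‖x i j‖^2 + ‖z i j‖^2) := by
        calc |⟪x i j, δ⟫| ≤ ‖x i j‖ * ‖δ‖ := abs_real_inner_le_norm _ _
          _ ≤ Real.sqrt (‖x i j‖^2 + ‖z i j‖^2) * R :=
              mul_le_mul hxle hδR (norm_nonneg δ) (Real.sqrt_nonneg _)
          _ = R * Real.sqrt (‖x i j‖^2 + ‖z i j‖^2) := mul_comm _ _
      calc |⟪x i j, δ⟫|^3 ≤ (R * Real.sqrt (‖x i j‖^2 + ‖z i j‖^2))^3 :=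
            pow_le_pow_left₀ (abs_nonneg _) h9 3
        _ = R^3 * (Real.sqrt (‖x i j‖^2 + ‖z i j‖^2))^3 := by ring
    calc (tot ni N : ℝ)⁻¹ * ∑ i ∈ Finset.range N, ∑ j : Fin (ni i), |⟪x i j, δ⟫|^3
        ≤ (tot ni N : ℝ)⁻¹ * ∑ i ∈ Finset.range N, ∑ j : Fin (ni i),
            (R^3 * (Real.sqrt (‖x i j‖^2 + ‖z i j‖^2))^3) :=
          mul_le_mul_of_nonneg_left (Finset.sum_le_sum fun i hi =>
            Finset.sum_le_sum fun j _ => h8 i hi j) hninv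
      _ = R^3 * ((tot ni N : ℝ)⁻¹ * ∑ i ∈ Finset.range N, ∑ j : Fin (ni i),
            (Real.sqrt (‖x i j‖^2 + ‖z i j‖^2))^3) := by
          simp_rw [← Finset.mul_sum]; ring
      _ ≤ R^3 * C := mul_le_mul_of_nonneg_left (hC N hN1') (by positivity)
  -- pointwise truncation inequality
  have hkey : ∀ i ∈ Finset.range N, ∀ j : Fin (ni i),
      (if ε0 ≤ ⟪x i j, α0⟫ then ⟪x i j, δ⟫^2 else 0)
        ≤ c^2 + L^2 * ((if ε0 ≤ ⟪x i j, α0⟫ then (1:ℝ) else 0) *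
            (if c ≤ |⟪x i j, δ⟫| then (1:ℝ) else 0)) + |⟪x i j, δ⟫|^3 / L := by
    intro i _ j
    have h3L : 0 ≤ |⟪x i j, δ⟫|^3 / L := by positivity
    have habs : (0:ℝ) ≤ |⟪x i j, δ⟫| := abs_nonneg _
    have hsqa : |⟪x i j, δ⟫|^2 = ⟪x i j, δ⟫^2 := sq_abs _
    by_cases h1 : ε0 ≤ ⟪x i j, α0⟫
    · by_cases h2 : c ≤ |⟪x i j, δ⟫|
      · simp only [if_pos h1, if_pos h2, mul_one, one_mul]
        by_cases h4 : |⟪x i j, δ⟫| ≤ L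
        · nlinarith [sq_nonneg c]
        · push_neg at h4
          have h5 : L * ⟪x i j, δ⟫^2 ≤ |⟪x i j, δ⟫|^3 := by nlinarith
          have h6 : ⟪x i j, δ⟫^2 ≤ |⟪x i j, δ⟫|^3 / L := (le_div_iff₀ hLpos).2 (by linarith [mul_comm L (⟪x i j, δ⟫^2)])
          nlinarith [sq_nonneg c, sq_nonneg L]
      · push_neg at h2
        simp only [if_pos h1, if_neg (not_le.2 h2), mul_zero]
        nlinarith [sq_nonneg L]
    · simp only [if_neg h1, zero_mul, mul_zero]
      positivity
  -- summing up the truncation inequality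
  have hconst : ∑ i ∈ Finset.range N, ∑ j : Fin (ni i), (c^2 : ℝ) = (tot ni N : ℝ) * c^2 := by
    simp only [Finset.sum_const, Finset.card_univ, Fintype.card_fin, nsmul_eq_mul]
    rw [← Finset.sum_mul]
    congr 1
    rw [tot]
    push_cast
    rfl
  have hsum2 : (tot ni N : ℝ)⁻¹ * ∑ i ∈ Finset.range N, ∑ j : Fin (ni i),
      (if ε0 ≤ ⟪x i j, α0⟫ then ⟪x i j, δ⟫^2 else 0)
      ≤ c^2 + L^2 * ((tot ni N : ℝ)⁻¹ * ∑ i ∈ Finset.range N, ∑ j : Fin (ni i),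
          ((if ε0 ≤ ⟪x i j, α0⟫ then (1:ℝ) else 0) *
            (if c ≤ |⟪x i j, δ⟫| then (1:ℝ) else 0))) + (R^3*C)/L := by
    have hs1 : ∑ i ∈ Finset.range N, ∑ j : Fin (ni i),
        (if ε0 ≤ ⟪x i j, α0⟫ then ⟪x i j, δ⟫^2 else 0)
        ≤ ∑ i ∈ Finset.range N, ∑ j : Fin (ni i),
            (c^2 + L^2 * ((if ε0 ≤ ⟪x i j, α0⟫ then (1:ℝ) else 0) *
              (if c ≤ |⟪x i j, δ⟫| then (1:ℝ) else 0)) + |⟪x i j, δ⟫|^3 / L) :=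
      Finset.sum_le_sum fun i hi => Finset.sum_le_sum fun j _ => hkey i hi j
    have hs2 : ∑ i ∈ Finset.range N, ∑ j : Fin (ni i),
        (c^2 + L^2 * ((if ε0 ≤ ⟪x i j, α0⟫ then (1:ℝ) else 0) *
          (if c ≤ |⟪x i j, δ⟫| then (1:ℝ) else 0)) + |⟪x i j, δ⟫|^3 / L)
        = (tot ni N : ℝ) * c^2
          + L^2 * (∑ i ∈ Finset.range N, ∑ j : Fin (ni i),
              ((if ε0 ≤ ⟪x i j, α0⟫ then (1:ℝ) else 0) *
                (if c ≤ |⟪x i j, δ⟫| then (1:ℝ) else 0)))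
          + (∑ i ∈ Finset.range N, ∑ j : Fin (ni i), |⟪x i j, δ⟫|^3) / L := by
      rw [← hconst]
      simp_rw [Finset.sum_add_distrib, ← Finset.mul_sum, ← Finset.sum_div]
    calc (tot ni N : ℝ)⁻¹ * ∑ i ∈ Finset.range N, ∑ j : Fin (ni i),
          (if ε0 ≤ ⟪x i j, α0⟫ then ⟪x i j, δ⟫^2 else 0)
        ≤ (tot ni N : ℝ)⁻¹ * ((tot ni N : ℝ) * c^2
          + L^2 * (∑ i ∈ Finset.range N, ∑ j : Fin (ni i),
              ((if ε0 ≤ ⟪x i j, α0⟫ then (1:ℝ) else 0) *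
                (if c ≤ |⟪x i j, δ⟫| then (1:ℝ) else 0)))
          + (∑ i ∈ Finset.range N, ∑ j : Fin (ni i), |⟪x i j, δ⟫|^3) / L) :=
          mul_le_mul_of_nonneg_left (le_trans hs1 (le_of_eq hs2)) hninv
      _ = ((tot ni N : ℝ)⁻¹ * (tot ni N : ℝ)) * c^2
          + L^2 * ((tot ni N : ℝ)⁻¹ * ∑ i ∈ Finset.range N, ∑ j : Fin (ni i),
              ((if ε0 ≤ ⟪x i j, α0⟫ then (1:ℝ) else 0) *
                (if c ≤ |⟪x i j, δ⟫| then (1:ℝ) else 0)))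
          + ((tot ni N : ℝ)⁻¹ * ∑ i ∈ Finset.range N, ∑ j : Fin (ni i), |⟪x i j, δ⟫|^3) / L := by
          ring
      _ ≤ c^2 + L^2 * ((tot ni N : ℝ)⁻¹ * ∑ i ∈ Finset.range N, ∑ j : Fin (ni i),
              ((if ε0 ≤ ⟪x i j, α0⟫ then (1:ℝ) else 0) *
                (if c ≤ |⟪x i j, δ⟫| then (1:ℝ) else 0))) + (R^3*C)/L := by
          rw [inv_mul_cancel₀ hnpos.ne', one_mul]
          gcongr
  -- conclude a lower bound on the indicator frequency
  have hS0 : d/(2*L^2) ≤ (tot ni N : ℝ)⁻¹ * ∑ i ∈ Finset.range N, ∑ j : Fin (ni i),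
      ((if ε0 ≤ ⟪x i j, α0⟫ then (1:ℝ) else 0) *
        (if c ≤ |⟪x i j, δ⟫| then (1:ℝ) else 0)) := by
    rw [div_le_iff₀ (by positivity)]
    have hd2 : d ≤ lam/2 - c^2 := by rw [hddef]; linarith
    nlinarith [hS2lb, hsum2, hRCL]
  have hfinal := hpart1 c hcpos hclt N α
  rw [← hδdef] at hfinal
  calc 1/2*ϱ1*c^2*(d/(2*L^2))
      ≤ 1/2*ϱ1*c^2 * ((tot ni N : ℝ)⁻¹ * ∑ i ∈ Finset.range N, ∑ j : Fin (ni i),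
          ((if ε0 ≤ ⟪x i j, α0⟫ then (1:ℝ) else 0) *
            (if c ≤ |⟪x i j, δ⟫| then (1:ℝ) else 0))) :=
        mul_le_mul_of_nonneg_left hS0 (by positivity)
    _ ≤ Qbar N α := hfinal
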